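/- Let H₀ and H₁ be complex Hilbert spaces, let a : dom(a) ⊆ H₀ → H₀ be a linear operator which is bijective from its domain onto H₀ with bounded inverse a⁻¹ ∈ L(H₀), and let b ∈ L(H₁, H₀), c ∈ L(H₀, H₁), d ∈ L(H₁) be bounded operators. Let M be the operator on H₀ × H₁ with domain dom(a) × H₁ given by M(u,v) = (au + bv, cu + dv). Then ran(M) is closed in H₀ × H₁ if and only if ran(d − c a⁻¹ b) is closed in H₁. -/

import Mathlib

open Complex Filter
open scoped InnerProductSpace

/-- Let `a : dom a ⊆ H₀ → H₀` be bijective from its domain onto `H₀` with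
bounded inverse `ainv`, and `b, c, d` bounded. Then the operator
`M(u,v) = (au + bv, cu + dv)` with domain `dom a × H₁` has closed range in `H₀ × H₁` iff
the Schur complement `d − c a⁻¹ b` has closed range in `H₁`. -/
theorem stmt_11
    {H₀ H₁ : Type*} [NormedAddCommGroup H₀] [InnerProductSpace ℂ H₀] [CompleteSpace H₀]
    [NormedAddCommGroup H₁] [InnerProductSpace ℂ H₁] [CompleteSpace H₁]
    (a : H₀ →ₗ.[ℂ] H₀) (ainv : H₀ →L[ℂ] H₀)
    (hamem : ∀ f : H₀, ainv f ∈ a.domain)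
    (haleft : ∀ u : a.domain, ainv (a u) = (u : H₀))
    (haright : ∀ f : H₀, a ⟨ainv f, hamem f⟩ = f)
    (b : H₁ →L[ℂ] H₀) (c : H₀ →L[ℂ] H₁) (d : H₁ →L[ℂ] H₁) :
    IsClosed {p : H₀ × H₁ | ∃ (u : a.domain) (v : H₁),
        p = (a u + b v, c (u : H₀) + d v)} ↔
    IsClosed ((LinearMap.range ((d - c.comp (ainv.comp b) : H₁ →L[ℂ] H₁) : H₁ →ₗ[ℂ] H₁) : Submodule ℂ H₁) : Set H₁) := by
  set s := d - c.comp (ainv.comp b) with hs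
  have hsv : ∀ v : H₁, s v = d v - c (ainv (b v)) := fun v => rfl
  -- the shear homeomorphism
  let e : (H₀ × H₁) ≃ₜ (H₀ × H₁) :=
    { toFun := fun p => (p.1, p.2 - c (ainv p.1))
      invFun := fun p => (p.1, p.2 + c (ainv p.1))
      left_inv := fun p => by simp
      right_inv := fun p => by simp
      continuous_toFun := by fun_prop
      continuous_invFun := by fun_prop }
  have key : {p : H₀ × H₁ | ∃ (u : a.domain) (v : H₁),
        p = (a u + b v, c (u : H₀) + d v)}
      = e ⁻¹' (Set.univ ×ˢ ((LinearMap.range (s : H₁ →ₗ[ℂ] H₁) : Submodule ℂ H₁) : Set H₁)) := by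
    ext p
    simp only [Set.mem_preimage, Set.mem_prod, Set.mem_univ, true_and, SetLike.mem_coe,
      LinearMap.mem_range, Set.mem_setOf_eq]
    constructor
    · rintro ⟨u, v, rfl⟩
      refine ⟨v, ?_⟩
      have h1 : ainv (a u + b v) = (u : H₀) + ainv (b v) := by
        rw [map_add, haleft]
      show s v = c (u : H₀) + d v - c (ainv (a u + b v))
      rw [h1, hsv, map_add]
      abel
    · rintro ⟨v, hv⟩
      change s v = p.2 - c (ainv p.1) at hv
      refine ⟨⟨ainv (p.1 - b v), hamem _⟩, v, ?_⟩
      have h2 : a ⟨ainv (p.1 - b v), hamem _⟩ = p.1 - b v := haright _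
      have hv' : d v - c (ainv (b v)) = p.2 - c (ainv p.1) := by rw [← hsv, hv]
      refine Prod.ext ?_ ?_
      · show p.1 = a ⟨ainv (p.1 - b v), hamem _⟩ + b v
        rw [h2]; abel
      · show p.2 = c (ainv (p.1 - b v)) + d v
        rw [map_sub, map_sub]
        have h3 : p.2 = d v - c (ainv (b v)) + c (ainv p.1) := by
          rw [← sub_eq_iff_eq_add, ← hv']
        rw [h3]; abel
  rw [key, e.isClosed_preimage]
  constructor
  · intro h
    have : ((LinearMap.range (s : H₁ →ₗ[ℂ] H₁) : Submodule ℂ H₁) : Set H₁)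
        = (fun v : H₁ => ((0 : H₀), v)) ⁻¹'
          (Set.univ ×ˢ ((LinearMap.range (s : H₁ →ₗ[ℂ] H₁) : Submodule ℂ H₁) : Set H₁)) := by
      ext v; simp
    rw [this]
    exact h.preimage (by fun_prop)
  · exact fun h => isClosed_univ.prod h
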